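/- The k-NN clustering with the maximum number of clusters is unique: if {C_i} and {C'_j} are two partitions of X, each of whose cells contains the k nearest neighbors of all its elements, and both achieve the maximal possible number of cells among all such partitions, then the two partitions are equal. -/

import Mathlib

open Finset

variable {X : Type*} [MetricSpace X] [Fintype X] [LinearOrder X]

/-- Tie-breaking key: `y` is compared to other points by distance to `x`,
with ties broken by the fixed linear order on `X`. -/
noncomputable def nnKey (x y : X) : ℝ ×ₗ X := toLex (dist x y, y)

noncomputable instance nnKeyDec (x : X) :
    DecidableRel (fun y z : X => nnKey x y ≤ nnKey x z) :=
  fun _ _ => Classical.dec _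

instance (x : X) : IsTrans X (fun y z => nnKey x y ≤ nnKey x z) :=
  ⟨fun _ _ _ h1 h2 => le_trans h1 h2⟩

instance (x : X) : IsAntisymm X (fun y z => nnKey x y ≤ nnKey x z) :=
  ⟨fun a b h1 h2 => by
    have h := le_antisymm h1 h2
    simpa [nnKey] using congrArg (fun p => (ofLex p).2) h⟩

instance (x : X) : IsTotal X (fun y z => nnKey x y ≤ nnKey x z) :=
  ⟨fun _ _ => le_total _ _⟩

/-- The points of `X \ {x}` listed in order of increasing distance to `x`
(ties broken by the fixed linear order). -/
noncomputable def nnList (x : X) : List X :=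
  (Finset.univ.erase x).sort (fun y z => nnKey x y ≤ nnKey x z)

/-- `nbhd k x` is the set `N_k(x)` of the `k` nearest neighbors of `x`. -/
noncomputable def nbhd (k : ℕ) (x : X) : Finset X :=
  ((nnList x).take k).toFinset

/-- The `k`-nearest-neighbor graph: `x — y` iff `y ∈ N_k(x)` or `x ∈ N_k(y)`. -/
noncomputable def nnGraph (k : ℕ) : SimpleGraph X where
  Adj x y := x ≠ y ∧ (y ∈ nbhd k x ∨ x ∈ nbhd k y)
  symm := by
    constructor
    intro x y h
    exact ⟨h.1.symm, h.2.symm⟩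
  loopless := by constructor; intro x h; exact h.1 rfl

/-- The cluster (connected component of the `k`-NN graph) containing `x`. -/
noncomputable def nnCluster (k : ℕ) (x : X) : Finset X := by
  classical
  exact Finset.univ.filter (fun y => (nnGraph (X := X) k).Reachable x y)

/-- The partition of `X` into connected components of the `k`-NN graph:
the maximal `k`-NN clustering. -/
noncomputable def maxClusters (k : ℕ) : Finset (Finset X) :=
  Finset.univ.image (nnCluster (X := X) k)

/-- A partition of `X` each of whose cells contains the `k` nearest
neighbors of all of its elements. -/
def IsKNNClustering (k : ℕ) (P : Finset (Finset X)) : Prop :=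
  (∀ C ∈ P, C.Nonempty) ∧
  (∀ C ∈ P, ∀ D ∈ P, C ≠ D → Disjoint C D) ∧
  (P.sup id = Finset.univ) ∧
  (∀ C ∈ P, ∀ x ∈ C, nbhd k x ⊆ C)

/-- All pairwise distances are distinct (for distinct unordered pairs). -/
def DistinctDists (X : Type*) [MetricSpace X] : Prop :=
  ∀ x y x' y' : X, x ≠ y → x' ≠ y' → dist x y = dist x' y' →
    (x = x' ∧ y = y') ∨ (x = y' ∧ y = x')

/-- The nearest neighbor of `x` (meaningful when `|X| ≥ 2`). -/
noncomputable def nn (x : X) : X := ((nnList x).head?).getD x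

lemma mem_nbhd_ne {k : ℕ} {x y : X} (h : y ∈ nbhd k x) : y ≠ x := by
  have hy : y ∈ nnList x := List.mem_of_mem_take (List.mem_toFinset.mp h)
  have : y ∈ (Finset.univ.erase x) := (Finset.mem_sort _).mp hy
  exact Finset.ne_of_mem_erase this

lemma adj_of_mem_nbhd {k : ℕ} {x y : X} (h : y ∈ nbhd k x) :
    (nnGraph (X := X) k).Adj x y :=
  ⟨(mem_nbhd_ne h).symm, Or.inl h⟩

lemma mem_nnCluster {k : ℕ} {x y : X} :
    y ∈ nnCluster (X := X) k x ↔ (nnGraph (X := X) k).Reachable x y := by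
  simp [nnCluster]

lemma mem_nnCluster_self {k : ℕ} (x : X) : x ∈ nnCluster (X := X) k x :=
  mem_nnCluster.mpr (SimpleGraph.Reachable.refl x)

lemma nnCluster_eq_of_reachable {k : ℕ} {x y : X}
    (h : (nnGraph (X := X) k).Reachable x y) :
    nnCluster (X := X) k x = nnCluster (X := X) k y := by
  ext z
  simp only [mem_nnCluster]
  exact ⟨fun hz => h.symm.trans hz, fun hz => h.trans hz⟩

/-- Along a walk in the `k`-NN graph, membership in a cell of a `k`-NN
clustering is preserved. -/
lemma mem_of_walk {k : ℕ} {P : Finset (Finset X)} (hP : IsKNNClustering k P)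
    {x y : X} (w : (nnGraph (X := X) k).Walk x y) :
    ∀ C ∈ P, x ∈ C → y ∈ C := by
  obtain ⟨hne, hdisj, hcov, hcl⟩ := hP
  induction w with
  | nil => exact fun C _ hx => hx
  | @cons a b c hadj w ih =>
    intro C hC ha
    obtain ⟨hab, h | h⟩ := hadj
    · exact ih C hC (hcl C hC a ha h)
    · -- a ∈ nbhd k b
      have hb : b ∈ P.sup id := by rw [hcov]; exact Finset.mem_univ b
      obtain ⟨D, hD, hbD⟩ := Finset.mem_sup.mp hb
      have haD : a ∈ D := hcl D hD b hbD h
      have hCD : C = D := by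
        by_contra hne'
        exact (Finset.disjoint_left.mp (hdisj C hC D hD hne')) ha haD
      exact ih C hC (hCD ▸ hbD)

lemma nnCluster_subset {k : ℕ} {P : Finset (Finset X)} (hP : IsKNNClustering k P)
    {C : Finset X} (hC : C ∈ P) {x : X} (hx : x ∈ C) :
    nnCluster (X := X) k x ⊆ C := by
  intro y hy
  obtain ⟨w⟩ := mem_nnCluster.mp hy
  exact mem_of_walk hP w C hC hx

/-- `maxClusters k` is itself a `k`-NN clustering. -/
lemma maxClusters_isKNNClustering (k : ℕ) :
    IsKNNClustering k (maxClusters (X := X) k) := by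
  refine ⟨?_, ?_, ?_, ?_⟩
  · rintro C hC
    obtain ⟨a, -, rfl⟩ := Finset.mem_image.mp hC
    exact ⟨a, mem_nnCluster_self a⟩
  · rintro C hC D hD hne
    obtain ⟨a, -, rfl⟩ := Finset.mem_image.mp hC
    obtain ⟨b, -, rfl⟩ := Finset.mem_image.mp hD
    rw [Finset.disjoint_left]
    intro z hza hzb
    exact hne ((nnCluster_eq_of_reachable (mem_nnCluster.mp hza)).trans
      (nnCluster_eq_of_reachable (mem_nnCluster.mp hzb)).symm)
  · apply le_antisymm
    · exact Finset.sup_le fun C _ => Finset.subset_univ C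
    · intro x _
      exact Finset.mem_sup.mpr ⟨nnCluster k x,
        Finset.mem_image_of_mem _ (Finset.mem_univ x), mem_nnCluster_self x⟩
  · rintro C hC x hx y hy
    obtain ⟨a, -, rfl⟩ := Finset.mem_image.mp hC
    have hax : (nnGraph (X := X) k).Reachable a x := mem_nnCluster.mp hx
    exact mem_nnCluster.mpr (hax.trans (adj_of_mem_nbhd hy).reachable)

/-- Any `k`-NN clustering with maximal number of cells equals `maxClusters k`. -/
lemma maximal_eq_maxClusters (k : ℕ) (P : Finset (Finset X))
    (hP : IsKNNClustering k P)
    (hPmax : ∀ R : Finset (Finset X), IsKNNClustering k R → R.card ≤ P.card) :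
    P = maxClusters (X := X) k := by
  classical
  obtain ⟨hne, hdisj, hcov, hcl⟩ := hP
  have hP' : IsKNNClustering k P := ⟨hne, hdisj, hcov, hcl⟩
  set f : Finset X → Finset X := fun K =>
    if h : ∃ C, C ∈ P ∧ ∃ x, x ∈ K ∧ x ∈ C then h.choose else ∅ with hf
  have hfP : ∀ K C, C ∈ P → K ⊆ C → K.Nonempty → f K = C := by
    intro K C hC hKC ⟨z, hz⟩
    have hex : ∃ C, C ∈ P ∧ ∃ x, x ∈ K ∧ x ∈ C := ⟨C, hC, z, hz, hKC hz⟩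
    have : f K = hex.choose := by simp only [hf, dif_pos hex]
    rw [this]
    obtain ⟨hD, w, hwK, hwD⟩ := hex.choose_spec
    by_contra hne'
    exact (Finset.disjoint_left.mp (hdisj _ hD C hC hne')) hwD (hKC hwK)
  have hmem : ∀ K ∈ maxClusters (X := X) k, f K ∈ P := by
    intro K hK
    obtain ⟨a, -, rfl⟩ := Finset.mem_image.mp hK
    have ha : a ∈ P.sup id := by rw [hcov]; exact Finset.mem_univ a
    obtain ⟨C, hC, haC⟩ := Finset.mem_sup.mp ha
    rw [hfP _ C hC (nnCluster_subset hP' hC haC) ⟨a, mem_nnCluster_self a⟩]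
    exact hC
  have hsurj : ∀ C ∈ P, ∃ K ∈ maxClusters (X := X) k, f K = C := by
    intro C hC
    obtain ⟨x, hx⟩ := hne C hC
    exact ⟨nnCluster k x, Finset.mem_image_of_mem _ (Finset.mem_univ x),
      hfP _ C hC (nnCluster_subset hP' hC hx) ⟨x, mem_nnCluster_self x⟩⟩
  have himg : (maxClusters (X := X) k).image f = P := by
    apply Finset.Subset.antisymm
    · intro C hC
      obtain ⟨K, hK, rfl⟩ := Finset.mem_image.mp hC
      exact hmem K hK
    · intro C hC
      obtain ⟨K, hK, hKC⟩ := hsurj C hC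
      exact Finset.mem_image.mpr ⟨K, hK, hKC⟩
  have hcard1 : P.card ≤ (maxClusters (X := X) k).card := by
    rw [← himg]; exact Finset.card_image_le
  have hcard2 : (maxClusters (X := X) k).card ≤ P.card :=
    hPmax _ (maxClusters_isKNNClustering k)
  have hcardeq : P.card = (maxClusters (X := X) k).card := le_antisymm hcard1 hcard2
  have hinj : Set.InjOn f (maxClusters (X := X) k) := by
    rw [← Finset.card_image_iff, himg, hcardeq]
  -- Every cell of `P` is a single cluster.
  have hsub : P ⊆ maxClusters (X := X) k := by
    intro C hC
    obtain ⟨x, hx⟩ := hne C hC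
    have hCeq : C = nnCluster (X := X) k x := by
      apply Finset.Subset.antisymm
      · intro y hy
        have h1 : f (nnCluster k y) = C :=
          hfP _ C hC (nnCluster_subset hP' hC hy) ⟨y, mem_nnCluster_self y⟩
        have h2 : f (nnCluster k x) = C :=
          hfP _ C hC (nnCluster_subset hP' hC hx) ⟨x, mem_nnCluster_self x⟩
        have := hinj (Finset.mem_coe.mpr (Finset.mem_image_of_mem _ (Finset.mem_univ y)))
          (Finset.mem_coe.mpr (Finset.mem_image_of_mem _ (Finset.mem_univ x)))
          (h1.trans h2.symm)
        rw [← this]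
        exact mem_nnCluster_self y
      · exact nnCluster_subset hP' hC hx
    rw [hCeq]
    exact Finset.mem_image_of_mem _ (Finset.mem_univ x)
  exact Finset.eq_of_subset_of_card_le hsub (le_of_eq hcardeq.symm)

/-- the k-NN clustering with maximal number of cells is unique. -/
theorem maximal_kNNClustering_unique (k : ℕ) (hcard : k + 1 ≤ Fintype.card X)
    (P Q : Finset (Finset X))
    (hP : IsKNNClustering k P) (hQ : IsKNNClustering k Q)
    (hPmax : ∀ R : Finset (Finset X), IsKNNClustering k R → R.card ≤ P.card)
    (hQmax : ∀ R : Finset (Finset X), IsKNNClustering k R → R.card ≤ Q.card) :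
    P = Q :=
  (maximal_eq_maxClusters k P hP hPmax).trans
    (maximal_eq_maxClusters k Q hQ hQmax).symm
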